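/- For every integer g ≥ 1, the direct product Γ_g × ℤ⁴ of a genus-g surface group with ℤ⁴ satisfies def(Γ_g × ℤ⁴) = −3 − 6g. -/

import Mathlib

open scoped commutatorElement

/-- An alternating bilinear form on `n → ℚ`. -/
structure AltForm (n : Type) where
  B : (n → ℚ) → (n → ℚ) → ℚ
  add_left : ∀ u v w, B (u + v) w = B u w + B v w
  add_right : ∀ u v w, B u (v + w) = B u v + B u w
  alt : ∀ u, B u u = 0

namespace AltForm

variable {n : Type} (ω : AltForm n)

theorem zero_left (v : n → ℚ) : ω.B 0 v = 0 := by
  have := ω.add_left 0 0 v; simpa using this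

theorem zero_right (v : n → ℚ) : ω.B v 0 = 0 := by
  have := ω.add_right v 0 0; simpa using this

theorem neg_left (u v : n → ℚ) : ω.B (-u) v = - ω.B u v := by
  have := ω.add_left u (-u) v
  simp only [add_neg_cancel, zero_left] at this
  linarith

theorem neg_right (u v : n → ℚ) : ω.B u (-v) = - ω.B u v := by
  have := ω.add_right u v (-v)
  simp only [add_neg_cancel, zero_right] at this
  linarith

theorem antisymm (u v : n → ℚ) : ω.B v u = - ω.B u v := by
  have h := ω.alt (u + v)
  rw [ω.add_left, ω.add_right, ω.add_right, ω.alt, ω.alt] at h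
  linarith

end AltForm

/-- Heisenberg-type central extension of `n → ℚ` by `ℚ` twisted by an alternating form. -/
def Heis {n : Type} (_ω : AltForm n) : Type := ((n → ℚ) × ℚ)

namespace Heis

variable {n : Type} {ω : AltForm n}

instance : Group (Heis ω) where
  mul x y := (x.1 + y.1, x.2 + y.2 + ω.B x.1 y.1)
  one := (0, 0)
  inv x := (-x.1, -x.2)
  mul_assoc x y z := by
    show (_, _) = (_ : Heis ω)
    refine Prod.ext (by show x.1 + y.1 + z.1 = x.1 + (y.1 + z.1); ring) ?_
    show x.2 + y.2 + ω.B x.1 y.1 + z.2 + ω.B (x.1 + y.1) z.1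
        = x.2 + (y.2 + z.2 + ω.B y.1 z.1) + ω.B x.1 (y.1 + z.1)
    rw [ω.add_left, ω.add_right]; ring
  one_mul x := by
    refine Prod.ext (by show 0 + x.1 = x.1; simp) ?_
    show 0 + x.2 + ω.B 0 x.1 = x.2; rw [ω.zero_left]; ring
  mul_one x := by
    refine Prod.ext (by show x.1 + 0 = x.1; simp) ?_
    show x.2 + 0 + ω.B x.1 0 = x.2; rw [ω.zero_right]; ring
  inv_mul_cancel x := by
    refine Prod.ext (by show -x.1 + x.1 = 0; simp) ?_
    show -x.2 + x.2 + ω.B (-x.1) x.1 = 0; rw [ω.neg_left, ω.alt]; ring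

theorem mul_def (x y : Heis ω) : x * y = (x.1 + y.1, x.2 + y.2 + ω.B x.1 y.1) := rfl

theorem one_def : (1 : Heis ω) = (0, 0) := rfl

/-- First projection as a homomorphism. -/
def fstHom (ω : AltForm n) : Heis ω →* Multiplicative (n → ℚ) where
  toFun x := Multiplicative.ofAdd x.1
  map_one' := rfl
  map_mul' x y := rfl

end Heis

section Cocycle

variable {n : Type} {a : ℕ}

/-- The lift of generators into the Heisenberg group. -/
def theta (ω : AltForm n) (η : Fin a → (n → ℚ)) (c : Fin a → ℚ) : FreeGroup (Fin a) →* Heis ω :=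
  FreeGroup.lift (fun i => ((η i, c i) : Heis ω))

/-- The abelianized evaluation. -/
def etaHat (η : Fin a → (n → ℚ)) : FreeGroup (Fin a) →* Multiplicative (n → ℚ) :=
  FreeGroup.lift (fun i => Multiplicative.ofAdd (η i))

theorem theta_of (ω : AltForm n) (η : Fin a → (n → ℚ)) (c : Fin a → ℚ) (i : Fin a) :
    theta ω η c (FreeGroup.of i) = ((η i, c i) : Heis ω) := FreeGroup.lift_apply_of

theorem theta_fst (ω : AltForm n) (η : Fin a → (n → ℚ)) (c : Fin a → ℚ)
    (w : FreeGroup (Fin a)) : (theta ω η c w).1 = Multiplicative.toAdd (etaHat η w) := by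
  have h : (Heis.fstHom ω).comp (theta ω η c) = etaHat η := by
    apply FreeGroup.ext_hom
    intro i
    simp [theta, etaHat, Heis.fstHom]
    exact congrArg Prod.fst (theta_of ω η c i)
  have := DFunLike.congr_fun h w
  exact congrArg Multiplicative.toAdd this

theorem theta_snd_mul (ω : AltForm n) (η : Fin a → (n → ℚ)) (c : Fin a → ℚ)
    (u v : FreeGroup (Fin a)) :
    (theta ω η c (u * v)).2 = (theta ω η c u).2 + (theta ω η c v).2
      + ω.B (Multiplicative.toAdd (etaHat η u)) (Multiplicative.toAdd (etaHat η v)) := by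
  rw [map_mul, Heis.mul_def, ← theta_fst ω η c u, ← theta_fst ω η c v]

theorem theta_snd_one (ω : AltForm n) (η : Fin a → (n → ℚ)) (c : Fin a → ℚ) :
    (theta ω η c 1).2 = 0 := by rw [map_one]; rfl

theorem theta_snd_inv (ω : AltForm n) (η : Fin a → (n → ℚ)) (c : Fin a → ℚ)
    (w : FreeGroup (Fin a)) : (theta ω η c w⁻¹).2 = -(theta ω η c w).2 := by
  rw [map_inv]; rfl

theorem theta_snd_add (ω ω' ω'' : AltForm n) (hB : ∀ u v, ω''.B u v = ω.B u v + ω'.B u v)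
    (η : Fin a → (n → ℚ)) (c c' : Fin a → ℚ) (w : FreeGroup (Fin a)) :
    (theta ω'' η (c + c') w).2 = (theta ω η c w).2 + (theta ω' η c' w).2 := by
  let φ : FreeGroup (Fin a) →* Heis ω'' :=
    { toFun := fun w => (((theta ω η c w).1, (theta ω η c w).2 + (theta ω' η c' w).2) : Heis ω''),
      map_one' := by
        show (((theta ω η c 1).1, (theta ω η c 1).2 + (theta ω' η c' 1).2) : Heis ω'') = _
        rw [map_one, map_one]
        show ((0, 0 + 0) : Heis ω'') = (1 : Heis ω'')
        rw [Heis.one_def, add_zero]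
      map_mul' := by
        intro u v
        refine Eq.trans ?_ (Heis.mul_def _ _).symm
        refine Prod.ext ?_ ?_
        · show (theta ω η c (u*v)).1 = (theta ω η c u).1 + (theta ω η c v).1
          rw [map_mul]; rfl
        · show (theta ω η c (u*v)).2 + (theta ω' η c' (u*v)).2 = _
          rw [theta_snd_mul, theta_snd_mul, hB, theta_fst ω η c, theta_fst ω η c]
          ring }
  have h : theta ω'' η (c + c') = φ := by
    apply FreeGroup.ext_hom
    intro i
    show _ = (((theta ω η c (FreeGroup.of i)).1, _) : Heis ω'')
    rw [theta_of, theta_of, theta_of]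
    rfl
  rw [h]
  rfl

theorem theta_snd_smul (q : ℚ) (ω ω' : AltForm n) (hB : ∀ u v, ω'.B u v = q * ω.B u v)
    (η : Fin a → (n → ℚ)) (c : Fin a → ℚ) (w : FreeGroup (Fin a)) :
    (theta ω' η (q • c) w).2 = q * (theta ω η c w).2 := by
  let φ : FreeGroup (Fin a) →* Heis ω' :=
    { toFun := fun w => (((theta ω η c w).1, q * (theta ω η c w).2) : Heis ω'),
      map_one' := by
        show (((theta ω η c 1).1, q * (theta ω η c 1).2) : Heis ω') = _
        rw [map_one]
        show ((0, q * 0) : Heis ω') = (1 : Heis ω')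
        rw [Heis.one_def, mul_zero]
      map_mul' := by
        intro u v
        refine Eq.trans ?_ (Heis.mul_def _ _).symm
        refine Prod.ext ?_ ?_
        · show (theta ω η c (u*v)).1 = (theta ω η c u).1 + (theta ω η c v).1
          rw [map_mul]; rfl
        · show q * (theta ω η c (u*v)).2 = _
          rw [theta_snd_mul, hB, theta_fst ω η c, theta_fst ω η c]
          ring }
  have h : theta ω' η (q • c) = φ := by
    apply FreeGroup.ext_hom
    intro i
    show _ = (((theta ω η c (FreeGroup.of i)).1, _) : Heis ω')
    rw [theta_of, theta_of]
    rfl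
  rw [h]
  rfl

end Cocycle


/-- `Γ` admits a finite presentation with `a` generators and `b` relators,
i.e. `Γ` is isomorphic to a free group on `a` generators modulo the normal closure
of `b` relators. -/
def IsPresentation (Γ : Type) [Group Γ] (a b : ℕ) : Prop :=
  ∃ r : Fin b → FreeGroup (Fin a), Nonempty (Γ ≃* PresentedGroup (Set.range r))

/-- `Γ` has deficiency `n`: some finite presentation realizes `a - b = n`, and every
finite presentation satisfies `a - b ≤ n`. -/
def HasDeficiency (Γ : Type) [Group Γ] (n : ℤ) : Prop :=
  (∃ a b : ℕ, IsPresentation Γ a b ∧ (a : ℤ) - (b : ℤ) = n) ∧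
    ∀ a b : ℕ, IsPresentation Γ a b → (a : ℤ) - (b : ℤ) ≤ n

open scoped commutatorElement in
/-- The surface relator `[x_1,y_1]⋯[x_g,y_g]` in the free group on `x_1,…,x_g,y_1,…,y_g`. -/
def surfaceRel (g : ℕ) : FreeGroup (Fin g ⊕ Fin g) :=
  (List.ofFn fun i : Fin g =>
    ⁅FreeGroup.of (Sum.inl i : Fin g ⊕ Fin g), FreeGroup.of (Sum.inr i)⁆).prod

/-- The genus-`g` surface group `⟨x_1,y_1,…,x_g,y_g ∣ [x_1,y_1]⋯[x_g,y_g]⟩`. -/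
abbrev SurfaceGroup (g : ℕ) : Type :=
  PresentedGroup ({surfaceRel g} : Set (FreeGroup (Fin g ⊕ Fin g)))


section Concrete

open Multiplicative

abbrev Gam (g : ℕ) : Type := (Fin g ⊕ Fin g) ⊕ Fin 4

abbrev M4 : Type := Multiplicative ℤ × Multiplicative ℤ × Multiplicative ℤ × Multiplicative ℤ

abbrev GG (g : ℕ) : Type := SurfaceGroup g × M4

/-- The four standard generators of `M4`. -/
def genT : Fin 4 → M4 :=
  ![(ofAdd 1, 1, 1, 1), (1, ofAdd 1, 1, 1), (1, 1, ofAdd 1, 1), (1, 1, 1, ofAdd 1)]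

/-- In the surface group the defining product of commutators is trivial. -/
theorem surfProd_eq_one (g : ℕ) :
    (List.ofFn fun i : Fin g =>
      ⁅(PresentedGroup.of (Sum.inl i) : SurfaceGroup g), PresentedGroup.of (Sum.inr i)⁆).prod
      = (1 : SurfaceGroup g) := by
  have h1 : PresentedGroup.mk ({surfaceRel g} : Set (FreeGroup (Fin g ⊕ Fin g)))
      (surfaceRel g) = 1 :=
    (QuotientGroup.eq_one_iff (surfaceRel g)).mpr
      (Subgroup.subset_normalClosure (Set.mem_singleton _))
  calc (List.ofFn fun i : Fin g =>
      ⁅(PresentedGroup.of (Sum.inl i) : SurfaceGroup g), PresentedGroup.of (Sum.inr i)⁆).prod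
      = PresentedGroup.mk _ (surfaceRel g) := by
        rw [surfaceRel, map_list_prod, List.map_ofFn]
        congr 1
    _ = 1 := h1

/-- The character of the surface group given by exponent sums. -/
def Ssurf (g : ℕ) : SurfaceGroup g →* Multiplicative ((Fin g ⊕ Fin g) → ℚ) :=
  PresentedGroup.toGroup (f := fun s => ofAdd (Pi.single s 1)) (by
    intro r hr
    rw [Set.mem_singleton_iff] at hr
    subst hr
    rw [surfaceRel, map_list_prod, List.map_ofFn]
    apply List.prod_eq_one
    intro x hx
    rw [List.mem_ofFn] at hx
    obtain ⟨i, rfl⟩ := hx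
    simp only [Function.comp, map_commutatorElement]
    exact commutatorElement_eq_one_iff_commute.mpr (Commute.all _ _))

theorem Ssurf_of (g : ℕ) (s : Fin g ⊕ Fin g) :
    Ssurf g (PresentedGroup.of s) = ofAdd (Pi.single s 1) := PresentedGroup.toGroup.of _

/-- The character of `M4` given by the four coordinates. -/
def T4hom : M4 →* Multiplicative (Fin 4 → ℚ) where
  toFun p := ofAdd ![((toAdd p.1 : ℤ) : ℚ), ((toAdd p.2.1 : ℤ) : ℚ), ((toAdd p.2.2.1 : ℤ) : ℚ), ((toAdd p.2.2.2 : ℤ) : ℚ)]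
  map_one' := by
    apply congrArg ofAdd
    funext k
    fin_cases k <;> simp
  map_mul' p q := by
    show _ = ofAdd (_ + _)
    apply congrArg ofAdd
    funext k
    fin_cases k <;> simp [toAdd_mul]

/-- The full vector of the `2g+4` coordinate characters of `GG g`. -/
def Vhom (g : ℕ) : GG g →* Multiplicative (Gam g → ℚ) where
  toFun x := ofAdd (Sum.elim (toAdd (Ssurf g x.1)) (toAdd (T4hom x.2)))
  map_one' := by
    apply congrArg ofAdd
    funext j
    cases j <;> simp
  map_mul' x y := by
    show _ = ofAdd (_ + _)
    apply congrArg ofAdd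
    funext j
    cases j <;> simp [toAdd_mul]

def Vadd (g : ℕ) (x : GG g) : Gam g → ℚ := toAdd (Vhom g x)

theorem Vadd_mul (g : ℕ) (x y : GG g) : Vadd g (x * y) = Vadd g x + Vadd g y := by
  simp [Vadd, map_mul, toAdd_mul]

/-- The standard generators of `GG g`. -/
def Ugen (g : ℕ) : Gam g → GG g :=
  Sum.elim (fun s => (PresentedGroup.of s, 1)) (fun k => (1, genT k))

theorem Vadd_U (g : ℕ) (j : Gam g) : Vadd g (Ugen g j) = Pi.single j 1 := by
  cases j with
  | inl s =>
    funext j'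
    show Sum.elim (toAdd (Ssurf g (PresentedGroup.of s))) (toAdd (T4hom 1)) j' = _
    rw [Ssurf_of, map_one]
    cases j' with
    | inl s' => simp [Pi.single_apply]
    | inr k => simp [Pi.single_apply]
  | inr k =>
    funext j'
    show Sum.elim (toAdd (Ssurf g 1)) (toAdd (T4hom (genT k))) j' = _
    rw [map_one]
    cases j' with
    | inl s' => simp [Pi.single_apply]
    | inr k' =>
      show toAdd (T4hom (genT k)) k' = _
      fin_cases k <;> fin_cases k' <;> simp [T4hom, genT, Pi.single_apply]

end Concrete

section Gen

open Multiplicative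

theorem M4_decomp (y : M4) :
    y = genT 0 ^ (toAdd y.1) * genT 1 ^ (toAdd y.2.1) * genT 2 ^ (toAdd y.2.2.1)
      * genT 3 ^ (toAdd y.2.2.2) := by
  obtain ⟨y1, y2, y3, y4⟩ := y
  refine Prod.ext ?_ (Prod.ext ?_ (Prod.ext ?_ ?_)) <;>
    simp [genT, ← ofAdd_zsmul, smul_eq_mul]

theorem closure_range_U (g : ℕ) : Subgroup.closure (Set.range (Ugen g)) = ⊤ := by
  rw [eq_top_iff]
  rintro ⟨x, y⟩ -
  have hx : (x, (1 : M4)) ∈ Subgroup.closure (Set.range (Ugen g)) := by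
    have h1 : x ∈ Subgroup.closure (Set.range (PresentedGroup.of :
        (Fin g ⊕ Fin g) → SurfaceGroup g)) := by
      rw [PresentedGroup.closure_range_of]; trivial
    have h2 : ((x, (1:M4)) : GG g) ∈ Subgroup.map (MonoidHom.inl (SurfaceGroup g) M4)
        (Subgroup.closure (Set.range PresentedGroup.of)) := ⟨x, h1, rfl⟩
    rw [MonoidHom.map_closure] at h2
    refine Subgroup.closure_mono ?_ h2
    rintro _ ⟨_, ⟨s, rfl⟩, rfl⟩
    exact ⟨Sum.inl s, rfl⟩
  have hy : (((1 : SurfaceGroup g), y) : GG g) ∈ Subgroup.closure (Set.range (Ugen g)) := by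
    have hU : ∀ k : Fin 4, (Ugen g (Sum.inr k) : GG g)
        = MonoidHom.inr (SurfaceGroup g) M4 (genT k) := fun k => rfl
    have : (((1 : SurfaceGroup g), y) : GG g) = (Ugen g (Sum.inr 0)) ^ (toAdd y.1)
        * (Ugen g (Sum.inr 1)) ^ (toAdd y.2.1) * (Ugen g (Sum.inr 2)) ^ (toAdd y.2.2.1)
        * (Ugen g (Sum.inr 3)) ^ (toAdd y.2.2.2) := by
      rw [hU, hU, hU, hU, ← map_zpow, ← map_zpow, ← map_zpow, ← map_zpow,
        ← map_mul, ← map_mul, ← map_mul, ← M4_decomp]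
      rfl
    rw [this]
    have hmem : ∀ k : Fin 4, Ugen g (Sum.inr k) ∈ Subgroup.closure (Set.range (Ugen g)) :=
      fun k => Subgroup.subset_closure ⟨Sum.inr k, rfl⟩
    exact mul_mem (mul_mem (mul_mem (zpow_mem (hmem 0) _) (zpow_mem (hmem 1) _))
      (zpow_mem (hmem 2) _)) (zpow_mem (hmem 3) _)
  have : ((x, y) : GG g) = (x, (1:M4)) * ((1:SurfaceGroup g), y) := by
    refine Prod.ext ?_ ?_ <;> simp
  rw [this]
  exact mul_mem hx hy

end Gen

section Lower

open Multiplicative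

theorem lift_map {α β : Type} {G : Type} [Group G] (f : β → G) (h : α → β)
    (x : FreeGroup α) : FreeGroup.lift f (FreeGroup.map h x) = FreeGroup.lift (f ∘ h) x := by
  have : (FreeGroup.lift f).comp (FreeGroup.map h) = FreeGroup.lift (f ∘ h) := by
    apply FreeGroup.ext_hom
    intro i
    simp
  exact DFunLike.congr_fun this x

theorem lift_of_eq_mk {α : Type} (rels : Set (FreeGroup α)) :
    FreeGroup.lift (PresentedGroup.of (rels := rels)) = (PresentedGroup.mk rels) := by
  apply FreeGroup.ext_hom
  intro i
  simp [PresentedGroup.of]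

abbrev Kap (g : ℕ) : Type :=
  ((Fin g ⊕ Fin g) × Fin 4) ⊕ ({p : Fin 4 × Fin 4 // p.1 < p.2} ⊕ Unit)

def r0 (g : ℕ) : Kap g → FreeGroup (Gam g)
  | Sum.inl (s, k) =>
      ⁅FreeGroup.of (Sum.inl s : Gam g), FreeGroup.of (Sum.inr k : Gam g)⁆
  | Sum.inr (Sum.inl p) =>
      ⁅FreeGroup.of (Sum.inr p.val.1 : Gam g), FreeGroup.of (Sum.inr p.val.2 : Gam g)⁆
  | Sum.inr (Sum.inr _) => FreeGroup.map Sum.inl (surfaceRel g)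

abbrev PP (g : ℕ) := PresentedGroup (Set.range (r0 g))

theorem r0_eq_one (g : ℕ) (k : Kap g) : PresentedGroup.mk (Set.range (r0 g)) (r0 g k) = 1 :=
  (QuotientGroup.eq_one_iff _).mpr (Subgroup.subset_normalClosure ⟨k, rfl⟩)

theorem mk_surfaceRel_eq_one (g : ℕ) :
    PresentedGroup.mk ({surfaceRel g} : Set (FreeGroup (Fin g ⊕ Fin g))) (surfaceRel g) = 1 :=
  (QuotientGroup.eq_one_iff (surfaceRel g)).mpr
    (Subgroup.subset_normalClosure (Set.mem_singleton _))

/-- The homomorphism `PP g →* GG g`. -/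
def phi (g : ℕ) : PP g →* GG g :=
  PresentedGroup.toGroup (f := Ugen g) (by
    rintro _ ⟨k, rfl⟩
    match k with
    | Sum.inl (s, k) =>
      rw [r0, map_commutatorElement, FreeGroup.lift_apply_of, FreeGroup.lift_apply_of]
      apply commutatorElement_eq_one_iff_commute.mpr
      show Ugen g (Sum.inl s) * Ugen g (Sum.inr k) = Ugen g (Sum.inr k) * Ugen g (Sum.inl s)
      simp only [Ugen, Sum.elim_inl, Sum.elim_inr]
      refine Prod.ext ?_ ?_ <;> simp
    | Sum.inr (Sum.inl p) =>
      rw [r0, map_commutatorElement, FreeGroup.lift_apply_of, FreeGroup.lift_apply_of]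
      apply commutatorElement_eq_one_iff_commute.mpr
      show Ugen g (Sum.inr p.val.1) * Ugen g (Sum.inr p.val.2)
        = Ugen g (Sum.inr p.val.2) * Ugen g (Sum.inr p.val.1)
      simp only [Ugen, Sum.elim_inr]
      refine Prod.ext ?_ ?_ <;> simp [mul_comm]
    | Sum.inr (Sum.inr u) =>
      rw [r0, lift_map]
      have h : (FreeGroup.lift ((Ugen g) ∘ Sum.inl)) =
          (MonoidHom.inl (SurfaceGroup g) M4).comp (FreeGroup.lift PresentedGroup.of) := by
        apply FreeGroup.ext_hom
        intro s
        simp only [Function.comp_apply, FreeGroup.lift_apply_of, MonoidHom.comp_apply]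
        rfl
      rw [h, MonoidHom.comp_apply, lift_of_eq_mk, mk_surfaceRel_eq_one, map_one])

theorem phi_of (g : ℕ) (j : Gam g) : phi g (PresentedGroup.of j) = Ugen g j :=
  PresentedGroup.toGroup.of _

/-- Generators of the `ℤ⁴`-part inside `PP g`. -/
def tau (g : ℕ) (k : Fin 4) : PP g := PresentedGroup.of (Sum.inr k)

theorem tau_comm (g : ℕ) (k l : Fin 4) : Commute (tau g k) (tau g l) := by
  have key : ∀ k l : Fin 4, k < l → Commute (tau g k) (tau g l) := by
    intro k l h
    apply commutatorElement_eq_one_iff_commute.mp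
    have := r0_eq_one g (Sum.inr (Sum.inl ⟨(k, l), h⟩))
    rw [r0, map_commutatorElement] at this
    exact this
  rcases lt_trichotomy k l with h | h | h
  · exact key k l h
  · subst h; exact Commute.refl _
  · exact (key l k h).symm

theorem of_inl_comm_tau (g : ℕ) (s : Fin g ⊕ Fin g) (k : Fin 4) :
    Commute (PresentedGroup.of (Sum.inl s) : PP g) (tau g k) := by
  apply commutatorElement_eq_one_iff_commute.mp
  have := r0_eq_one g (Sum.inl (s, k))
  rw [r0, map_commutatorElement] at this
  exact this

/-- The homomorphism `M4 →* PP g`. -/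
def psi2 (g : ℕ) : M4 →* PP g :=
  (zpowersHom _ (tau g 0)).noncommCoprod
    ((zpowersHom _ (tau g 1)).noncommCoprod
      ((zpowersHom _ (tau g 2)).noncommCoprod (zpowersHom _ (tau g 3))
        (fun _ _ => by
          rw [zpowersHom_apply, zpowersHom_apply]; exact (tau_comm g 2 3).zpow_zpow _ _))
      (fun _ n => by
        rw [MonoidHom.noncommCoprod_apply]
        exact Commute.mul_right ((tau_comm g 1 2).zpow_zpow _ _)
          ((tau_comm g 1 3).zpow_zpow _ _)))
    (fun _ n => by
      rw [MonoidHom.noncommCoprod_apply, MonoidHom.noncommCoprod_apply]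
      exact Commute.mul_right ((tau_comm g 0 1).zpow_zpow _ _)
        (Commute.mul_right ((tau_comm g 0 2).zpow_zpow _ _)
          ((tau_comm g 0 3).zpow_zpow _ _)))

theorem of_inl_comm_psi2 (g : ℕ) (s : Fin g ⊕ Fin g) (y : M4) :
    Commute (PresentedGroup.of (Sum.inl s) : PP g) (psi2 g y) := by
  rw [psi2, MonoidHom.noncommCoprod_apply, MonoidHom.noncommCoprod_apply,
    MonoidHom.noncommCoprod_apply]
  exact Commute.mul_right ((of_inl_comm_tau g s 0).zpow_right _)
    (Commute.mul_right ((of_inl_comm_tau g s 1).zpow_right _)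
      (Commute.mul_right ((of_inl_comm_tau g s 2).zpow_right _)
        ((of_inl_comm_tau g s 3).zpow_right _)))

/-- The homomorphism `SurfaceGroup g →* PP g`. -/
def psi1 (g : ℕ) : SurfaceGroup g →* PP g :=
  PresentedGroup.toGroup (f := fun s => PresentedGroup.of (Sum.inl s)) (by
    intro r hr
    rw [Set.mem_singleton_iff] at hr
    subst hr
    have h : FreeGroup.lift (fun s => (PresentedGroup.of (Sum.inl s) : PP g))
        = (PresentedGroup.mk (Set.range (r0 g))).comp (FreeGroup.map Sum.inl) := by
      apply FreeGroup.ext_hom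
      intro s
      simp [PresentedGroup.of]
    rw [h, MonoidHom.comp_apply]
    exact r0_eq_one g (Sum.inr (Sum.inr ())))

theorem psi1_comm_psi2 (g : ℕ) (x : SurfaceGroup g) (y : M4) :
    Commute (psi1 g x) (psi2 g y) := by
  have hx : x ∈ Subgroup.comap (psi1 g) (Subgroup.centralizer {psi2 g y}) := by
    have hsub : Set.range (PresentedGroup.of : (Fin g ⊕ Fin g) → SurfaceGroup g)
        ⊆ Subgroup.comap (psi1 g) (Subgroup.centralizer {psi2 g y}) := by
      rintro _ ⟨s, rfl⟩
      show psi1 g (PresentedGroup.of s) ∈ Subgroup.centralizer {psi2 g y}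
      rw [Subgroup.mem_centralizer_iff]
      rintro h hh
      rw [Set.mem_singleton_iff] at hh
      subst hh
      rw [psi1, PresentedGroup.toGroup.of]
      exact (of_inl_comm_psi2 g s y).eq.symm
    have htop : (⊤ : Subgroup (SurfaceGroup g))
        ≤ Subgroup.comap (psi1 g) (Subgroup.centralizer {psi2 g y}) := by
      rw [← PresentedGroup.closure_range_of ({surfaceRel g} : Set (FreeGroup (Fin g ⊕ Fin g)))]
      exact Subgroup.closure_le _ |>.mpr hsub
    exact htop (Subgroup.mem_top x)
  have := Subgroup.mem_comap.mp hx
  rw [Subgroup.mem_centralizer_iff] at this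
  exact (this (psi2 g y) (Set.mem_singleton _)).symm

/-- The homomorphism `GG g →* PP g`. -/
def psi (g : ℕ) : GG g →* PP g :=
  (psi1 g).noncommCoprod (psi2 g) (psi1_comm_psi2 g)

theorem psi_U (g : ℕ) (j : Gam g) : psi g (Ugen g j) = PresentedGroup.of j := by
  cases j with
  | inl s =>
    show psi g ((PresentedGroup.of s, 1) : GG g) = _
    rw [psi, MonoidHom.noncommCoprod_apply, map_one, mul_one, psi1, PresentedGroup.toGroup.of]
  | inr k =>
    show psi g (((1 : SurfaceGroup g), genT k) : GG g) = _
    rw [psi, MonoidHom.noncommCoprod_apply, map_one, one_mul]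
    show psi2 g (genT k) = tau g k
    fin_cases k <;>
      simp [psi2, genT, MonoidHom.noncommCoprod_apply, zpowersHom_apply]

theorem phi_psi (g : ℕ) (x : GG g) : phi g (psi g x) = x := by
  let K : Subgroup (GG g) :=
    { carrier := {x | phi g (psi g x) = x}
      one_mem' := by simp only [Set.mem_setOf_eq, map_one]
      mul_mem' := by
        intro p q hp hq
        simp only [Set.mem_setOf_eq, map_mul] at *
        rw [hp, hq]
      inv_mem' := by
        intro p hp
        simp only [Set.mem_setOf_eq, map_inv] at *
        rw [hp] }
  have : x ∈ K := by
    have htop : Subgroup.closure (Set.range (Ugen g)) ≤ K := by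
      apply Subgroup.closure_le _ |>.mpr
      rintro _ ⟨j, rfl⟩
      show phi g (psi g (Ugen g j)) = Ugen g j
      rw [psi_U, phi_of]
    exact htop (by rw [closure_range_U g]; trivial)
  exact this

theorem psi_phi (g : ℕ) : (psi g).comp (phi g) = MonoidHom.id (PP g) := by
  apply PresentedGroup.ext
  intro j
  show psi g (phi g (PresentedGroup.of j)) = PresentedGroup.of j
  rw [phi_of, psi_U]

/-- The presentation isomorphism for the lower bound. -/
noncomputable def presIso (g : ℕ) : GG g ≃* PP g :=
  MonoidHom.toMulEquiv (psi g) (phi g)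
    (MonoidHom.ext fun x => phi_psi g x) (psi_phi g)

end Lower

section Transport

theorem isPresentation_of_equiv {Γ : Type} [Group Γ] {ι κ : Type} [Fintype ι] [Fintype κ]
    [DecidableEq ι] {a b : ℕ} (hι : Fintype.card ι = a) (hκ : Fintype.card κ = b)
    (r : κ → FreeGroup ι) (e : Γ ≃* PresentedGroup (Set.range r)) : IsPresentation Γ a b := by
  let eι : ι ≃ Fin a := Fintype.equivFinOfCardEq hι
  let eκ : κ ≃ Fin b := Fintype.equivFinOfCardEq hκ
  refine ⟨fun k => FreeGroup.freeGroupCongr eι (r (eκ.symm k)), ?_⟩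
  have hset : Set.range (fun k => FreeGroup.freeGroupCongr eι (r (eκ.symm k)))
      = (FreeGroup.freeGroupCongr eι) '' (Set.range r) := by
    ext x
    constructor
    · rintro ⟨k, rfl⟩
      exact ⟨r (eκ.symm k), ⟨eκ.symm k, rfl⟩, rfl⟩
    · rintro ⟨y, ⟨k, rfl⟩, rfl⟩
      exact ⟨eκ k, by simp⟩
  rw [hset]
  exact ⟨e.trans (PresentedGroup.equivPresentedGroup (Set.range r) eι)⟩

theorem isPresentation_GG (g : ℕ) : IsPresentation (GG g) (2 * g + 4) (8 * g + 7) := by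
  have hι : Fintype.card (Gam g) = 2 * g + 4 := by
    simp [Fintype.card_sum]
    omega
  have hcard6 : Fintype.card {p : Fin 4 × Fin 4 // p.1 < p.2} = 6 := by decide
  have hκ : Fintype.card (Kap g) = 8 * g + 7 := by
    simp [Fintype.card_sum, Fintype.card_prod, hcard6]
    omega
  exact isPresentation_of_equiv hι hκ (r0 g) (presIso g)

end Transport

section Upper

open Multiplicative

/-- Coefficient space for the relevant alternating forms: dimension `8g+7`. -/
abbrev Dsp (g : ℕ) : Type :=
  ((Fin g ⊕ Fin g) × Fin 4 → ℚ) × ({p : Fin 4 × Fin 4 // p.1 < p.2} → ℚ) × ℚ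

/-- Coefficient matrix of the alternating form attached to `d : Dsp g`. -/
def coef {g : ℕ} (d : Dsp g) : Gam g → Gam g → ℚ
  | Sum.inl w, Sum.inr k => d.1 (w, k)
  | Sum.inr k, Sum.inl w => -d.1 (w, k)
  | Sum.inr k, Sum.inr l =>
      if h : k < l then d.2.1 ⟨(k, l), h⟩ else if h' : l < k then -d.2.1 ⟨(l, k), h'⟩ else 0
  | Sum.inl (Sum.inl i), Sum.inl (Sum.inr i') => if i = i' then d.2.2 else 0
  | Sum.inl (Sum.inr i), Sum.inl (Sum.inl i') => if i = i' then -d.2.2 else 0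
  | Sum.inl (Sum.inl _), Sum.inl (Sum.inl _) => 0
  | Sum.inl (Sum.inr _), Sum.inl (Sum.inr _) => 0

theorem coef_antisymm {g : ℕ} (d : Dsp g) (j j' : Gam g) : coef d j' j = -coef d j j' := by
  rcases j with (i | i) | k <;> rcases j' with (i' | i') | k'
  · simp [coef]
  · simp [coef]
    rcases eq_or_ne i i' with h | h
    · subst h; simp
    · rw [if_neg h, if_neg (Ne.symm h)]; simp
  · simp [coef]
  · simp [coef]
    rcases eq_or_ne i i' with h | h
    · subst h; simp
    · rw [if_neg h, if_neg (Ne.symm h)]; simp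
  · simp [coef]
  · simp [coef]
  · simp [coef]
  · simp [coef]
  · show (if h : k' < k then d.2.1 ⟨(k', k), h⟩ else if h' : k < k' then -d.2.1 ⟨(k, k'), h'⟩
      else 0) = -(if h : k < k' then d.2.1 ⟨(k, k'), h⟩ else if h' : k' < k then
      -d.2.1 ⟨(k', k), h'⟩ else 0)
    rcases lt_trichotomy k k' with h | h | h
    · rw [dif_neg (lt_asymm h), dif_pos h, dif_pos h]
    · subst h; simp
    · rw [dif_pos h, dif_neg (lt_asymm h), dif_pos h]; simp

theorem coef_add {g : ℕ} (d d' : Dsp g) (j j' : Gam g) :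
    coef (d + d') j j' = coef d j j' + coef d' j j' := by
  rcases j with (i | i) | k <;> rcases j' with (i' | i') | k' <;>
    simp [coef, Prod.fst_add, Prod.snd_add, Pi.add_apply] <;> (try split_ifs) <;> (try ring)

theorem coef_smul {g : ℕ} (q : ℚ) (d : Dsp g) (j j' : Gam g) :
    coef (q • d) j j' = q * coef d j j' := by
  rcases j with (i | i) | k <;> rcases j' with (i' | i') | k' <;>
    simp [coef, Prod.smul_fst, Prod.smul_snd, Pi.smul_apply, smul_eq_mul] <;>
      (try split_ifs) <;> (try ring)

/-- The alternating form attached to `d`. -/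
def formB {g : ℕ} (d : Dsp g) (u v : Gam g → ℚ) : ℚ :=
  ∑ j : Gam g, ∑ j' : Gam g, coef d j j' * (u j * v j')

theorem formB_add_left {g : ℕ} (d : Dsp g) (u v w : Gam g → ℚ) :
    formB d (u + v) w = formB d u w + formB d v w := by
  simp [formB, Pi.add_apply, mul_add, add_mul, Finset.sum_add_distrib]

theorem formB_add_right {g : ℕ} (d : Dsp g) (u v w : Gam g → ℚ) :
    formB d u (v + w) = formB d u v + formB d u w := by
  simp [formB, Pi.add_apply, mul_add, add_mul, Finset.sum_add_distrib]

theorem formB_alt {g : ℕ} (d : Dsp g) (u : Gam g → ℚ) : formB d u u = 0 := by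
  have h : formB d u u + formB d u u = 0 := by
    nth_rewrite 2 [formB]
    rw [Finset.sum_comm]
    rw [formB, ← Finset.sum_add_distrib]
    refine Finset.sum_eq_zero ?_
    intro j _
    rw [← Finset.sum_add_distrib]
    refine Finset.sum_eq_zero ?_
    intro j' _
    rw [coef_antisymm]
    ring
  linarith

/-- The alternating form as `AltForm`. -/
def formA {g : ℕ} (d : Dsp g) : AltForm (Gam g) :=
  { B := formB d
    add_left := formB_add_left d
    add_right := formB_add_right d
    alt := formB_alt d }

theorem formB_single {g : ℕ} (d : Dsp g) (j1 j2 : Gam g) :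
    formB d (Pi.single j1 1) (Pi.single j2 1) = coef d j1 j2 := by
  rw [formB]
  rw [Finset.sum_eq_single j1]
  · rw [Finset.sum_eq_single j2]
    · simp
    · intro j' _ hne
      simp [Pi.single_apply, hne]
    · intro h; exact absurd (Finset.mem_univ _) h
  · intro j _ hne
    refine Finset.sum_eq_zero ?_
    intro j' _
    simp [Pi.single_apply, hne]
  · intro h; exact absurd (Finset.mem_univ _) h

theorem formB_zero_left {g : ℕ} (d : Dsp g) (v : Gam g → ℚ) : formB d 0 v = 0 :=
  (formA d).zero_left v

theorem formB_zero_right {g : ℕ} (d : Dsp g) (v : Gam g → ℚ) : formB d v 0 = 0 :=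
  (formA d).zero_right v

theorem formA_add {g : ℕ} (d d' : Dsp g) (u v : Gam g → ℚ) :
    (formA (d + d')).B u v = (formA d).B u v + (formA d').B u v := by
  show formB (d + d') u v = formB d u v + formB d' u v
  simp only [formB]
  rw [← Finset.sum_add_distrib]
  refine Finset.sum_congr rfl ?_
  intro j _
  rw [← Finset.sum_add_distrib]
  refine Finset.sum_congr rfl ?_
  intro j' _
  rw [coef_add]; ring

theorem formA_smul {g : ℕ} (q : ℚ) (d : Dsp g) (u v : Gam g → ℚ) :
    (formA (q • d)).B u v = q * (formA d).B u v := by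
  show formB (q • d) u v = q * formB d u v
  simp only [formB]
  rw [Finset.mul_sum]
  refine Finset.sum_congr rfl ?_
  intro j _
  rw [Finset.mul_sum]
  refine Finset.sum_congr rfl ?_
  intro j' _
  rw [coef_smul]; ring

end Upper

section UpperMaps

open Multiplicative

variable {a b : ℕ}

/-- Evaluation of a rational character of the free group. -/
def chiHat (χ : Fin a → ℚ) : FreeGroup (Fin a) →* Multiplicative ℚ :=
  FreeGroup.lift fun i => ofAdd (χ i)

theorem chiHat_add (χ χ' : Fin a → ℚ) (w : FreeGroup (Fin a)) :
    chiHat (χ + χ') w = chiHat χ w * chiHat χ' w := by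
  have h : chiHat (χ + χ') = (chiHat χ) * (chiHat χ') := by
    apply FreeGroup.ext_hom
    intro i
    simp [chiHat, ofAdd_add]
  rw [h]; rfl

theorem chiHat_smul (q : ℚ) (χ : Fin a → ℚ) (w : FreeGroup (Fin a)) :
    chiHat (q • χ) w = ofAdd (q * toAdd (chiHat χ w)) := by
  have h : chiHat (q • χ) = (AddMonoidHom.mulLeft q).toMultiplicative.comp (chiHat χ) := by
    apply FreeGroup.ext_hom
    intro i
    simp [chiHat, AddMonoidHom.toMultiplicative, AddMonoidHom.mulLeft]
  rw [h]; rfl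

/-- The relator matrix as a linear map. -/
def Tmap (r : Fin b → FreeGroup (Fin a)) : (Fin a → ℚ) →ₗ[ℚ] (Fin b → ℚ) where
  toFun χ := fun k => toAdd (chiHat χ (r k))
  map_add' χ χ' := by
    funext k
    simp [chiHat_add, toAdd_mul]
  map_smul' q χ := by
    funext k
    simp [chiHat_smul, smul_eq_mul]

end UpperMaps

section UpperCore

open Multiplicative

variable {g a b : ℕ}

/-- Images of the free generators of the presentation in `ℚ^Γ`. -/
def etaF (r : Fin b → FreeGroup (Fin a)) (e : GG g ≃* PresentedGroup (Set.range r)) :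
    Fin a → (Gam g → ℚ) := fun i =>
  Vadd g (e.symm (PresentedGroup.mk _ (FreeGroup.of i)))

theorem etaHat_eq (r : Fin b → FreeGroup (Fin a)) (e : GG g ≃* PresentedGroup (Set.range r))
    (w : FreeGroup (Fin a)) :
    etaHat (etaF r e) w = Vhom g (e.symm (PresentedGroup.mk _ w)) := by
  have h : etaHat (etaF r e)
      = (Vhom g).comp ((e.symm : PresentedGroup (Set.range r) →* GG g).comp
        (PresentedGroup.mk _)) := by
    apply FreeGroup.ext_hom
    intro i
    simp only [MonoidHom.comp_apply]
    rw [etaHat, FreeGroup.lift_apply_of]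
    show ofAdd (etaF r e i) = _
    rw [etaF, Vadd, ofAdd_toAdd]
    rfl
  rw [h]
  rfl

/-- Abelianised evaluation on the free group. -/
def EAF (r : Fin b → FreeGroup (Fin a)) (e : GG g ≃* PresentedGroup (Set.range r))
    (w : FreeGroup (Fin a)) : Gam g → ℚ := toAdd (etaHat (etaF r e) w)

theorem EAF_eq (r : Fin b → FreeGroup (Fin a)) (e : GG g ≃* PresentedGroup (Set.range r))
    (w : FreeGroup (Fin a)) : EAF r e w = Vadd g (e.symm (PresentedGroup.mk _ w)) := by
  rw [EAF, etaHat_eq]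
  rfl

theorem EAF_mul (r : Fin b → FreeGroup (Fin a)) (e : GG g ≃* PresentedGroup (Set.range r))
    (u v : FreeGroup (Fin a)) : EAF r e (u * v) = EAF r e u + EAF r e v := by
  simp [EAF, map_mul, toAdd_mul]

theorem EAF_inv (r : Fin b → FreeGroup (Fin a)) (e : GG g ≃* PresentedGroup (Set.range r))
    (u : FreeGroup (Fin a)) : EAF r e u⁻¹ = -EAF r e u := by
  simp [EAF, map_inv, toAdd_inv]

theorem EAF_r (r : Fin b → FreeGroup (Fin a)) (e : GG g ≃* PresentedGroup (Set.range r))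
    (k : Fin b) : EAF r e (r k) = 0 := by
  rw [EAF_eq]
  have h1 : PresentedGroup.mk (Set.range r) (r k) = 1 :=
    (QuotientGroup.eq_one_iff _).mpr (Subgroup.subset_normalClosure ⟨k, rfl⟩)
  rw [h1, map_one, Vadd, map_one]
  rfl

/-- The adjusted cochain on the free group. -/
def fF (r : Fin b → FreeGroup (Fin a)) (e : GG g ≃* PresentedGroup (Set.range r))
    (χ : Fin a → ℚ) (d : Dsp g) (w : FreeGroup (Fin a)) : ℚ :=
  (theta (formA d) (etaF r e) 0 w).2 - toAdd (chiHat χ w)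

theorem fF_mul (r : Fin b → FreeGroup (Fin a)) (e : GG g ≃* PresentedGroup (Set.range r))
    (χ : Fin a → ℚ) (d : Dsp g) (u v : FreeGroup (Fin a)) :
    fF r e χ d (u * v) = fF r e χ d u + fF r e χ d v
      + formB d (EAF r e u) (EAF r e v) := by
  rw [fF, fF, fF, theta_snd_mul, map_mul, toAdd_mul,
    show (formA d).B = formB d from rfl, EAF, EAF]
  ring

theorem fF_one (r : Fin b → FreeGroup (Fin a)) (e : GG g ≃* PresentedGroup (Set.range r))
    (χ : Fin a → ℚ) (d : Dsp g) : fF r e χ d 1 = 0 := by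
  rw [fF, theta_snd_one, map_one]
  simp

theorem fF_inv (r : Fin b → FreeGroup (Fin a)) (e : GG g ≃* PresentedGroup (Set.range r))
    (χ : Fin a → ℚ) (d : Dsp g) (w : FreeGroup (Fin a)) :
    fF r e χ d w⁻¹ = -fF r e χ d w := by
  have h := fF_mul r e χ d w w⁻¹
  rw [mul_inv_cancel, fF_one, EAF_inv] at h
  have h2 : formB d (EAF r e w) (-(EAF r e w)) = 0 := by
    rw [show formB d = (formA d).B from rfl, (formA d).neg_right, (formA d).alt]
    ring
  rw [h2] at h
  linarith

end UpperCore

section UpperCore2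

open Multiplicative

variable {g a b : ℕ}

theorem memN (r : Fin b → FreeGroup (Fin a)) (e : GG g ≃* PresentedGroup (Set.range r))
    (χ : Fin a → ℚ) (d : Dsp g) (hv : ∀ k, fF r e χ d (r k) = 0) :
    ∀ n ∈ Subgroup.normalClosure (Set.range r), EAF r e n = 0 ∧ fF r e χ d n = 0 := by
  let K : Subgroup (FreeGroup (Fin a)) :=
    { carrier := {w | EAF r e w = 0 ∧ fF r e χ d w = 0}
      one_mem' := by
        constructor
        · have : (1 : FreeGroup (Fin a)) = 1 * 1 := by rw [one_mul]
          rw [EAF]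
          simp [map_one]
        · exact fF_one r e χ d
      mul_mem' := by
        rintro u v ⟨hu1, hu2⟩ ⟨hv1, hv2⟩
        constructor
        · rw [EAF_mul, hu1, hv1, add_zero]
        · rw [fF_mul, hu1, hu2, hv2, formB_zero_left]
          ring
      inv_mem' := by
        rintro u ⟨hu1, hu2⟩
        constructor
        · rw [EAF_inv, hu1, neg_zero]
        · rw [fF_inv, hu2, neg_zero] }
  haveI : K.Normal := by
    constructor
    rintro n ⟨hn1, hn2⟩ w
    constructor
    · show EAF r e (w * n * w⁻¹) = 0
      rw [EAF_mul, EAF_mul, EAF_inv, hn1]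
      ring
    · show fF r e χ d (w * n * w⁻¹) = 0
      rw [fF_mul, fF_mul, hn2, hn1, formB_zero_right, EAF_mul, hn1, EAF_inv, add_zero,
        fF_inv]
      rw [show formB d = (formA d).B from rfl, (formA d).neg_right]
      simp [(formA d).alt]
  intro n hn
  have hsub : Set.range r ⊆ (K : Set (FreeGroup (Fin a))) := by
    rintro x ⟨k, rfl⟩
    exact ⟨EAF_r r e k, hv k⟩
  exact Subgroup.normalClosure_le_normal hsub hn

/-- The induced cochain on `GG g`. -/
noncomputable def FGf (r : Fin b → FreeGroup (Fin a))
    (e : GG g ≃* PresentedGroup (Set.range r)) (χ : Fin a → ℚ) (d : Dsp g) (x : GG g) : ℚ :=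
  fF r e χ d (Classical.choose (PresentedGroup.mk_surjective (Set.range r) (e x)))

theorem FGf_spec (r : Fin b → FreeGroup (Fin a)) (e : GG g ≃* PresentedGroup (Set.range r))
    (χ : Fin a → ℚ) (d : Dsp g) (hv : ∀ k, fF r e χ d (r k) = 0) (x : GG g)
    (w : FreeGroup (Fin a)) (hw : PresentedGroup.mk (Set.range r) w = e x) :
    fF r e χ d w = FGf r e χ d x := by
  have hw0 : PresentedGroup.mk (Set.range r)
      (Classical.choose (PresentedGroup.mk_surjective (Set.range r) (e x))) = e x :=
    Classical.choose_spec (PresentedGroup.mk_surjective (Set.range r) (e x))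
  set w0 := Classical.choose (PresentedGroup.mk_surjective (Set.range r) (e x))
  have heq : (QuotientGroup.mk w : PresentedGroup (Set.range r)) = QuotientGroup.mk w0 := by
    show PresentedGroup.mk (Set.range r) w = PresentedGroup.mk (Set.range r) w0
    rw [hw, hw0]
  have hmem : w⁻¹ * w0 ∈ Subgroup.normalClosure (Set.range r) := QuotientGroup.eq.mp heq
  obtain ⟨h1, h2⟩ := memN r e χ d hv _ hmem
  have : w0 = w * (w⁻¹ * w0) := by group
  rw [FGf]
  show fF r e χ d w = fF r e χ d w0
  rw [this, fF_mul, h2, h1, formB_zero_right]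
  ring

theorem FGf_mul (r : Fin b → FreeGroup (Fin a)) (e : GG g ≃* PresentedGroup (Set.range r))
    (χ : Fin a → ℚ) (d : Dsp g) (hv : ∀ k, fF r e χ d (r k) = 0) (x y : GG g) :
    FGf r e χ d (x * y) = FGf r e χ d x + FGf r e χ d y
      + formB d (Vadd g x) (Vadd g y) := by
  have hwx := Classical.choose_spec (PresentedGroup.mk_surjective (Set.range r) (e x))
  have hwy := Classical.choose_spec (PresentedGroup.mk_surjective (Set.range r) (e y))
  set wx := Classical.choose (PresentedGroup.mk_surjective (Set.range r) (e x))
  set wy := Classical.choose (PresentedGroup.mk_surjective (Set.range r) (e y))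
  have hmul : PresentedGroup.mk (Set.range r) (wx * wy) = e (x * y) := by
    rw [map_mul, map_mul, hwx, hwy]
  have h1 := FGf_spec r e χ d hv (x * y) (wx * wy) hmul
  rw [← h1, fF_mul]
  have hEx : EAF r e wx = Vadd g x := by rw [EAF_eq, hwx, MulEquiv.symm_apply_apply]
  have hEy : EAF r e wy = Vadd g y := by rw [EAF_eq, hwy, MulEquiv.symm_apply_apply]
  rw [hEx, hEy, FGf_spec r e χ d hv x wx hwx, FGf_spec r e χ d hv y wy hwy]

theorem FGf_one (r : Fin b → FreeGroup (Fin a)) (e : GG g ≃* PresentedGroup (Set.range r))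
    (χ : Fin a → ℚ) (d : Dsp g) (hv : ∀ k, fF r e χ d (r k) = 0) :
    FGf r e χ d 1 = 0 := by
  have h := FGf_spec r e χ d hv 1 1 (by rw [map_one, map_one])
  rw [← h, fF_one]

theorem Vadd_inv (g : ℕ) (x : GG g) : Vadd g x⁻¹ = -Vadd g x := by
  simp [Vadd, map_inv, toAdd_inv]

theorem FGf_inv (r : Fin b → FreeGroup (Fin a)) (e : GG g ≃* PresentedGroup (Set.range r))
    (χ : Fin a → ℚ) (d : Dsp g) (hv : ∀ k, fF r e χ d (r k) = 0) (x : GG g) :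
    FGf r e χ d x⁻¹ = -FGf r e χ d x := by
  have h := FGf_mul r e χ d hv x x⁻¹
  rw [mul_inv_cancel, FGf_one r e χ d hv, Vadd_inv] at h
  rw [show formB d = (formA d).B from rfl, (formA d).neg_right, (formA d).alt] at h
  linarith

theorem FGf_comm (r : Fin b → FreeGroup (Fin a)) (e : GG g ≃* PresentedGroup (Set.range r))
    (χ : Fin a → ℚ) (d : Dsp g) (hv : ∀ k, fF r e χ d (r k) = 0) (x y : GG g)
    (hxy : x * y = y * x) : formB d (Vadd g x) (Vadd g y) = 0 := by
  have h1 := FGf_mul r e χ d hv x y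
  have h2 := FGf_mul r e χ d hv y x
  rw [← hxy] at h2
  have h3 : formB d (Vadd g x) (Vadd g y) = formB d (Vadd g y) (Vadd g x) := by linarith
  have h4 : formB d (Vadd g y) (Vadd g x) = -formB d (Vadd g x) (Vadd g y) :=
    (formA d).antisymm _ _
  linarith

theorem Vadd_commutator (g : ℕ) (x y : GG g) : Vadd g ⁅x, y⁆ = 0 := by
  rw [Vadd, map_commutatorElement,
    commutatorElement_eq_one_iff_commute.mpr (Commute.all _ _)]
  rfl

theorem FGf_commutator (r : Fin b → FreeGroup (Fin a))
    (e : GG g ≃* PresentedGroup (Set.range r)) (χ : Fin a → ℚ) (d : Dsp g)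
    (hv : ∀ k, fF r e χ d (r k) = 0) (x y : GG g) :
    FGf r e χ d ⁅x, y⁆ = 2 * formB d (Vadd g x) (Vadd g y) := by
  rw [commutatorElement_def]
  have hB := (formA d)
  have h1 := FGf_mul r e χ d hv x y
  have h2 := FGf_mul r e χ d hv (x * y) x⁻¹
  have h3 := FGf_mul r e χ d hv (x * y * x⁻¹) y⁻¹
  rw [Vadd_mul, Vadd_inv] at h2
  have hV2 : Vadd g (x * y * x⁻¹) = Vadd g y := by
    rw [Vadd_mul, Vadd_mul, Vadd_inv]; ring
  rw [hV2, Vadd_inv] at h3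
  rw [show formB d = (formA d).B from rfl] at h1 h2 h3 ⊢
  rw [(formA d).add_left, (formA d).neg_right, (formA d).neg_right, (formA d).alt] at h2
  rw [(formA d).neg_right, (formA d).alt] at h3
  have h5 : (formA d).B (Vadd g y) (Vadd g x) = -(formA d).B (Vadd g x) (Vadd g y) :=
    (formA d).antisymm _ _
  rw [FGf_inv r e χ d hv x] at h2
  rw [FGf_inv r e χ d hv y] at h3
  linarith

theorem FGf_listprod (r : Fin b → FreeGroup (Fin a)) (e : GG g ≃* PresentedGroup (Set.range r))
    (χ : Fin a → ℚ) (d : Dsp g) (hv : ∀ k, fF r e χ d (r k) = 0) (l : List (GG g))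
    (hl : ∀ z ∈ l, Vadd g z = 0) : FGf r e χ d l.prod = (l.map (FGf r e χ d)).sum := by
  induction l with
  | nil =>
    rw [List.prod_nil, List.map_nil, List.sum_nil, FGf_one r e χ d hv]
  | cons z t ih =>
    rw [List.prod_cons, List.map_cons, List.sum_cons, FGf_mul r e χ d hv,
      hl z (List.mem_cons_self), show formB d = (formA d).B from rfl, (formA d).zero_left,
      ih (fun z hz => hl z (List.mem_cons_of_mem _ hz))]
    ring

end UpperCore2

section UpperInj

open Multiplicative

theorem core_inj {g a b : ℕ} (hg : 1 ≤ g) (r : Fin b → FreeGroup (Fin a))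
    (e : GG g ≃* PresentedGroup (Set.range r)) (d : Dsp g) (χ : Fin a → ℚ)
    (hv : ∀ k, (theta (formA d) (etaF r e) 0 (r k)).2 = Tmap r χ k) : d = 0 := by
  have hv' : ∀ k, fF r e χ d (r k) = 0 := by
    intro k
    rw [fF, hv k]
    exact sub_self _
  have hA : ∀ (w : Fin g ⊕ Fin g) (k : Fin 4), d.1 (w, k) = 0 := by
    intro w k
    have hxy : Ugen g (Sum.inl w) * Ugen g (Sum.inr k)
        = Ugen g (Sum.inr k) * Ugen g (Sum.inl w) := by
      simp only [Ugen, Sum.elim_inl, Sum.elim_inr]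
      refine Prod.ext ?_ ?_ <;> simp
    have h := FGf_comm r e χ d hv' _ _ hxy
    rw [Vadd_U, Vadd_U, formB_single] at h
    rcases w with i | i <;> exact h
  have hE : ∀ p : {p : Fin 4 × Fin 4 // p.1 < p.2}, d.2.1 p = 0 := by
    rintro ⟨⟨k, l⟩, hkl⟩
    have hxy : Ugen g (Sum.inr k) * Ugen g (Sum.inr l)
        = Ugen g (Sum.inr l) * Ugen g (Sum.inr k) := by
      simp only [Ugen, Sum.elim_inr]
      refine Prod.ext ?_ ?_ <;> simp [mul_comm]
    have h := FGf_comm r e χ d hv' _ _ hxy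
    rw [Vadd_U, Vadd_U, formB_single] at h
    show d.2.1 ⟨(k, l), hkl⟩ = 0
    rw [← h]
    show d.2.1 ⟨(k, l), hkl⟩ = (if h : k < l then d.2.1 ⟨(k, l), h⟩
      else if h' : l < k then -d.2.1 ⟨(l, k), h'⟩ else 0)
    rw [dif_pos hkl]
  have hs : d.2.2 = 0 := by
    have hP1 : (List.ofFn fun i : Fin g =>
        ⁅Ugen g (Sum.inl (Sum.inl i)), Ugen g (Sum.inl (Sum.inr i))⁆).prod = (1 : GG g) := by
      have heq : (List.ofFn fun i : Fin g =>
          ⁅Ugen g (Sum.inl (Sum.inl i)), Ugen g (Sum.inl (Sum.inr i))⁆)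
          = List.map (MonoidHom.inl (SurfaceGroup g) M4)
            (List.ofFn fun i : Fin g =>
              ⁅(PresentedGroup.of (Sum.inl i) : SurfaceGroup g),
                PresentedGroup.of (Sum.inr i)⁆) := by
        rw [List.map_ofFn]
        congr 1
      rw [heq, ← map_list_prod, surfProd_eq_one, map_one]
    have h0 := FGf_listprod r e χ d hv'
      (List.ofFn fun i : Fin g =>
        ⁅Ugen g (Sum.inl (Sum.inl i)), Ugen g (Sum.inl (Sum.inr i))⁆)
      (fun z hz => by
        rw [List.mem_ofFn] at hz
        obtain ⟨i, rfl⟩ := hz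
        exact Vadd_commutator g _ _)
    rw [hP1, FGf_one r e χ d hv', List.map_ofFn, List.sum_ofFn] at h0
    have h1 : ∀ i : Fin g, (FGf r e χ d ∘ fun i =>
        ⁅Ugen g (Sum.inl (Sum.inl i)), Ugen g (Sum.inl (Sum.inr i))⁆) i = 2 * d.2.2 := by
      intro i
      rw [Function.comp_apply, FGf_commutator r e χ d hv', Vadd_U, Vadd_U, formB_single]
      show 2 * (if i = i then d.2.2 else 0) = _
      rw [if_pos rfl]
    have h2 : ∑ i : Fin g, (FGf r e χ d ∘ fun i =>
        ⁅Ugen g (Sum.inl (Sum.inl i)), Ugen g (Sum.inl (Sum.inr i))⁆) i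
        = ∑ _i : Fin g, 2 * d.2.2 := Finset.sum_congr rfl fun i _ => h1 i
    rw [h2, Finset.sum_const, Finset.card_univ, Fintype.card_fin, nsmul_eq_mul] at h0
    have hgq : (g : ℚ) ≠ 0 := by
      simp only [ne_eq, Nat.cast_eq_zero]
      omega
    rcases mul_eq_zero.mp h0.symm with h | h
    · exact absurd h hgq
    · linarith
  refine Prod.ext ?_ (Prod.ext ?_ ?_)
  · funext p
    obtain ⟨w, k⟩ := p
    exact hA w k
  · funext p
    exact hE p
  · exact hs

/-- The composite linear map `Dsp g → ℚ^b / im T`. -/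
noncomputable def vLin {g a b : ℕ} (r : Fin b → FreeGroup (Fin a))
    (e : GG g ≃* PresentedGroup (Set.range r)) : Dsp g →ₗ[ℚ] (Fin b → ℚ) where
  toFun d := fun k => (theta (formA d) (etaF r e) 0 (r k)).2
  map_add' d d' := by
    funext k
    have := theta_snd_add (formA d) (formA d') (formA (d + d')) (formA_add d d')
      (etaF r e) 0 0 (r k)
    simpa using this
  map_smul' q d := by
    funext k
    have := theta_snd_smul q (formA d) (formA (q • d)) (formA_smul q d) (etaF r e) 0 (r k)
    simpa using this

noncomputable def PsiMap {g a b : ℕ} (r : Fin b → FreeGroup (Fin a))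
    (e : GG g ≃* PresentedGroup (Set.range r)) :
    Dsp g →ₗ[ℚ] ((Fin b → ℚ) ⧸ LinearMap.range (Tmap r)) :=
  (LinearMap.range (Tmap r)).mkQ.comp (vLin r e)

theorem PsiMap_inj {g a b : ℕ} (hg : 1 ≤ g) (r : Fin b → FreeGroup (Fin a))
    (e : GG g ≃* PresentedGroup (Set.range r)) : Function.Injective (PsiMap r e) := by
  rw [← LinearMap.ker_eq_bot]
  rw [Submodule.eq_bot_iff]
  intro d hd
  rw [LinearMap.mem_ker, PsiMap, LinearMap.comp_apply, Submodule.mkQ_apply,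
    Submodule.Quotient.mk_eq_zero] at hd
  obtain ⟨χ, hχ⟩ := hd
  exact core_inj hg r e d χ (fun k => (congrFun hχ k).symm)

end UpperInj

section KerDim

open Multiplicative

variable {g a b : ℕ}

/-- Chosen representatives of the standard generators. -/
noncomputable def repU (r : Fin b → FreeGroup (Fin a))
    (e : GG g ≃* PresentedGroup (Set.range r)) (j : Gam g) : FreeGroup (Fin a) :=
  Classical.choose (PresentedGroup.mk_surjective (Set.range r) (e (Ugen g j)))

theorem repU_spec (r : Fin b → FreeGroup (Fin a)) (e : GG g ≃* PresentedGroup (Set.range r))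
    (j : Gam g) : PresentedGroup.mk (Set.range r) (repU r e j) = e (Ugen g j) :=
  Classical.choose_spec (PresentedGroup.mk_surjective (Set.range r) (e (Ugen g j)))

/-- Evaluation of characters in the kernel at standard generators. -/
noncomputable def evmap (r : Fin b → FreeGroup (Fin a))
    (e : GG g ≃* PresentedGroup (Set.range r)) :
    (LinearMap.ker (Tmap r)) →ₗ[ℚ] (Gam g → ℚ) where
  toFun χ := fun j => toAdd (chiHat χ.1 (repU r e j))
  map_add' χ χ' := by
    funext j
    show toAdd (chiHat (χ.1 + χ'.1) (repU r e j)) = _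
    rw [chiHat_add, toAdd_mul]
    rfl
  map_smul' q χ := by
    funext j
    show toAdd (chiHat (q • χ.1) (repU r e j)) = _
    rw [chiHat_smul]
    rfl

theorem evmap_inj (r : Fin b → FreeGroup (Fin a)) (e : GG g ≃* PresentedGroup (Set.range r)) :
    Function.Injective (evmap r e) := by
  rw [← LinearMap.ker_eq_bot, Submodule.eq_bot_iff]
  rintro ⟨χ, hχ⟩ h
  have hrel : ∀ rel ∈ Set.range r, FreeGroup.lift (fun i => ofAdd (χ i)) rel = 1 := by
    rintro _ ⟨k, rfl⟩
    have h1 : Tmap r χ = 0 := LinearMap.mem_ker.mp hχ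
    have h2 := congrFun h1 k
    show chiHat χ (r k) = 1
    have h3 : toAdd (chiHat χ (r k)) = 0 := h2
    rw [← ofAdd_toAdd (chiHat χ (r k)), h3]
    rfl
  let ξ : PresentedGroup (Set.range r) →* Multiplicative ℚ := PresentedGroup.toGroup hrel
  have hmk : ∀ w, ξ (PresentedGroup.mk (Set.range r) w) = chiHat χ w := fun w => rfl
  have hUj : ∀ j, ξ (e (Ugen g j)) = 1 := by
    intro j
    rw [← repU_spec r e j, hmk]
    have h4 : toAdd (chiHat χ (repU r e j)) = 0 := congrFun h j
    rw [← ofAdd_toAdd (chiHat χ (repU r e j)), h4]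
    rfl
  have hall : ∀ x : GG g, ξ (e x) = 1 := by
    have hle : Subgroup.closure (Set.range (Ugen g))
        ≤ (ξ.comp (e : GG g →* PresentedGroup (Set.range r))).ker := by
      rw [Subgroup.closure_le]
      rintro _ ⟨j, rfl⟩
      exact hUj j
    rw [closure_range_U g] at hle
    intro x
    exact hle (Subgroup.mem_top x)
  apply Subtype.ext
  show χ = 0
  funext i
  have h5 : chiHat χ (FreeGroup.of i) = 1 := by
    have h6 := hall (e.symm (PresentedGroup.mk (Set.range r) (FreeGroup.of i)))
    rw [MulEquiv.apply_symm_apply] at h6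
    rw [← hmk]
    exact h6
  have h7 : chiHat χ (FreeGroup.of i) = ofAdd (χ i) := FreeGroup.lift_apply_of
  rw [h7] at h5
  have : χ i = toAdd (ofAdd (χ i)) := rfl
  rw [this, h5]
  rfl

/-- Pairing with a vector as a character of `Multiplicative (Gam g → ℚ)`. -/
def dotH (g : ℕ) (v : Gam g → ℚ) : Multiplicative (Gam g → ℚ) →* Multiplicative ℚ where
  toFun u := ofAdd (∑ j, v j * toAdd u j)
  map_one' := by
    simp
  map_mul' u u' := by
    rw [← ofAdd_add]
    apply congrArg ofAdd
    rw [toAdd_mul]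
    simp [Pi.add_apply, mul_add, Finset.sum_add_distrib]

theorem evmap_surj (r : Fin b → FreeGroup (Fin a)) (e : GG g ≃* PresentedGroup (Set.range r)) :
    Function.Surjective (evmap r e) := by
  intro v
  set ξv : GG g →* Multiplicative ℚ := (dotH g v).comp (Vhom g) with hξv
  set χ : Fin a → ℚ :=
    fun i => toAdd (ξv (e.symm (PresentedGroup.mk (Set.range r) (FreeGroup.of i)))) with hχdef
  have hcomp : chiHat χ = ξv.comp ((e.symm : PresentedGroup (Set.range r) →* GG g).comp
      (PresentedGroup.mk (Set.range r))) := by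
    apply FreeGroup.ext_hom
    intro i
    rw [chiHat, FreeGroup.lift_apply_of]
    show ofAdd (χ i) = _
    rw [hχdef]
    simp only [MonoidHom.comp_apply]
    rw [ofAdd_toAdd]
    rfl
  have hker : χ ∈ LinearMap.ker (Tmap r) := by
    rw [LinearMap.mem_ker]
    funext k
    show toAdd (chiHat χ (r k)) = 0
    rw [DFunLike.congr_fun hcomp (r k)]
    simp only [MonoidHom.comp_apply]
    have h1 : PresentedGroup.mk (Set.range r) (r k) = 1 :=
      (QuotientGroup.eq_one_iff _).mpr (Subgroup.subset_normalClosure ⟨k, rfl⟩)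
    rw [h1, map_one, map_one]
    rfl
  refine ⟨⟨χ, hker⟩, ?_⟩
  funext j
  show toAdd (chiHat χ (repU r e j)) = v j
  rw [DFunLike.congr_fun hcomp (repU r e j)]
  simp only [MonoidHom.comp_apply]
  rw [repU_spec]
  show toAdd (ξv (e.symm (e (Ugen g j)))) = v j
  rw [MulEquiv.symm_apply_apply]
  show toAdd ((dotH g v) (Vhom g (Ugen g j))) = v j
  have h2 : toAdd (Vhom g (Ugen g j)) = Pi.single j 1 := Vadd_U g j
  show (∑ j', v j' * toAdd (Vhom g (Ugen g j)) j') = v j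
  rw [h2]
  rw [Finset.sum_eq_single j]
  · simp
  · intro j' _ hne
    simp [Pi.single_apply, hne]
  · intro hj; exact absurd (Finset.mem_univ _) hj

theorem finrank_ker_Tmap (r : Fin b → FreeGroup (Fin a))
    (e : GG g ≃* PresentedGroup (Set.range r)) :
    Module.finrank ℚ (LinearMap.ker (Tmap r)) = 2 * g + 4 := by
  have hequiv : (LinearMap.ker (Tmap r)) ≃ₗ[ℚ] (Gam g → ℚ) :=
    LinearEquiv.ofBijective (evmap r e) ⟨evmap_inj r e, evmap_surj r e⟩
  rw [hequiv.finrank_eq, Module.finrank_pi]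
  simp only [Fintype.card_sum, Fintype.card_fin]
  omega

end KerDim

theorem upper_bound {g : ℕ} (hg : 1 ≤ g) (a b : ℕ) (h : IsPresentation (GG g) a b) :
    (a : ℤ) - (b : ℤ) ≤ -3 - 6 * (g : ℤ) := by
  obtain ⟨r, ⟨e⟩⟩ := h
  have hD : Module.finrank ℚ (Dsp g) = 8 * g + 7 := by
    rw [Module.finrank_prod, Module.finrank_prod, Module.finrank_pi, Module.finrank_pi,
      Module.finrank_self]
    have hc6 : Fintype.card {p : Fin 4 × Fin 4 // p.1 < p.2} = 6 := by decide
    rw [hc6]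
    simp only [Fintype.card_prod, Fintype.card_sum, Fintype.card_fin]
    omega
  have h1 : Module.finrank ℚ (Dsp g)
      ≤ Module.finrank ℚ ((Fin b → ℚ) ⧸ LinearMap.range (Tmap r)) :=
    LinearMap.finrank_le_finrank_of_injective (PsiMap_inj hg r e)
  have h2 : Module.finrank ℚ ((Fin b → ℚ) ⧸ LinearMap.range (Tmap r))
      + Module.finrank ℚ (LinearMap.range (Tmap r)) = Module.finrank ℚ (Fin b → ℚ) :=
    Submodule.finrank_quotient_add_finrank _
  have h3 : Module.finrank ℚ (LinearMap.range (Tmap r))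
      + Module.finrank ℚ (LinearMap.ker (Tmap r)) = Module.finrank ℚ (Fin a → ℚ) :=
    LinearMap.finrank_range_add_finrank_ker _
  have h4 := finrank_ker_Tmap r e
  rw [Module.finrank_pi, Fintype.card_fin] at h2 h3
  rw [hD] at h1
  rw [h4] at h3
  omega

/-- `def(Γ_g × ℤ⁴) = -3 - 6g` for every `g ≥ 1`. -/
theorem deficiency_surfaceGroup_prod_int_pow_four (g : ℕ) (hg : 1 ≤ g) :
    HasDeficiency
      (SurfaceGroup g ×
        (Multiplicative ℤ × Multiplicative ℤ × Multiplicative ℤ × Multiplicative ℤ))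
      (-3 - 6 * (g : ℤ)) := by
  constructor
  · refine ⟨2 * g + 4, 8 * g + 7, isPresentation_GG g, ?_⟩
    push_cast
    ring
  · intro a b h
    exact upper_bound hg a b h
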